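/- Let μ > 0 and η(k) = η_c/√(k+1) with 0 < η_c·μ ≤ 1, and set C_k = 1 − η(k)·μ. Define for k ≥ 2 the quantity S(k) = Σ_{t=0}^{k−2} ( Π_{l=t+1}^{k−1} C_l )·η(t)² + η(k−1)². Then for every ε > 0 there exists K such that S(k) ≤ ε for all k ≥ K; equivalently, lim_{k→∞} S(k) = 0. -/

import Mathlib

open Filter Finset

theorem statement_5 (μ ηc : ℝ) (hμ : 0 < μ) (hηc : 0 < ηc) (hηcμ : ηc * μ ≤ 1)
    (η : ℕ → ℝ) (hη : ∀ k : ℕ, η k = ηc / Real.sqrt (k + 1))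
    (C : ℕ → ℝ) (hC : ∀ k : ℕ, C k = 1 - η k * μ)
    (S : ℕ → ℝ)
    (hS : ∀ k : ℕ, 2 ≤ k → S k =
      (∑ t ∈ Finset.range (k - 1), (∏ l ∈ Finset.Icc (t + 1) (k - 1), C l) * η t ^ 2)
        + η (k - 1) ^ 2) :
    Tendsto S atTop (nhds 0) := by
  have hsqpos : ∀ k : ℕ, (0:ℝ) < Real.sqrt (k + 1) := fun k =>
    Real.sqrt_pos.2 (by positivity)
  have hsq1 : ∀ k : ℕ, (1:ℝ) ≤ Real.sqrt (k + 1) := by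
    intro k
    have h : (1:ℝ) ≤ (k:ℝ) + 1 := by have := Nat.cast_nonneg (α := ℝ) k; linarith
    calc (1:ℝ) = Real.sqrt 1 := Real.sqrt_one.symm
      _ ≤ Real.sqrt ((k:ℝ) + 1) := Real.sqrt_le_sqrt h
  have hηpos : ∀ k, 0 < η k := by
    intro k; rw [hη k]; exact div_pos hηc (hsqpos k)
  have hηle : ∀ k, η k ≤ ηc := by
    intro k; rw [hη k]; exact div_le_self hηc.le (hsq1 k)
  have hημ1 : ∀ k, η k * μ ≤ 1 := fun k =>
    le_trans (mul_le_mul_of_nonneg_right (hηle k) hμ.le) hηcμ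
  have hC0 : ∀ k, 0 ≤ C k := by intro k; rw [hC k]; linarith [hημ1 k]
  have hC1 : ∀ k, C k ≤ 1 := by
    intro k; rw [hC k]
    have := mul_pos (hηpos k) hμ
    linarith
  have hηanti : ∀ a b : ℕ, a ≤ b → η b ≤ η a := by
    intro a b hab
    rw [hη a, hη b]
    apply div_le_div_of_nonneg_left hηc.le (hsqpos a)
    exact Real.sqrt_le_sqrt (by push_cast; exact_mod_cast (by have := (Nat.cast_le (α := ℝ)).2 hab; linarith : (a:ℝ)+1 ≤ (b:ℝ)+1))
  have hsqtends : Tendsto (fun k : ℕ => Real.sqrt (k + 1)) atTop atTop := by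
    rw [tendsto_atTop_atTop]
    intro b
    refine ⟨Nat.ceil (b ^ 2), fun k hk => ?_⟩
    rcases le_or_gt b 0 with hb | hb
    · exact hb.trans (Real.sqrt_nonneg _)
    · have hb2 : b ^ 2 ≤ (k : ℝ) + 1 := by
        calc b ^ 2 ≤ (Nat.ceil (b ^ 2) : ℝ) := Nat.le_ceil _
          _ ≤ (k : ℝ) := Nat.cast_le.2 hk
          _ ≤ (k : ℝ) + 1 := by linarith
      nlinarith [Real.sq_sqrt (show (0:ℝ) ≤ (k:ℝ) + 1 by positivity),
        Real.sqrt_nonneg ((k:ℝ) + 1)]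
  have hηtends : Tendsto η atTop (nhds 0) := by
    have := Tendsto.div_atTop (tendsto_const_nhds (x := ηc) (f := atTop)) hsqtends
    apply this.congr
    intro k; rw [hη k]
  -- product over Ico tends to 0
  have hprod0 : ∀ m : ℕ, Tendsto (fun n => ∏ l ∈ Finset.Ico m n, C l) atTop (nhds 0) := by
    intro m
    have hH := Real.tendsto_sum_range_one_div_nat_succ_atTop
    have hdiv : Tendsto (fun n => ∑ l ∈ Finset.Ico m n, η l) atTop atTop := by
      apply tendsto_atTop_mono' atTop
        (show ∀ᶠ n in atTop,
          ηc * (∑ i ∈ range n, (1:ℝ)/(i+1)) - ηc * (∑ i ∈ range m, (1:ℝ)/(i+1))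
            ≤ ∑ l ∈ Finset.Ico m n, η l from ?_)
      · exact tendsto_atTop_add_const_right _ _ (hH.const_mul_atTop hηc)
      · filter_upwards [eventually_ge_atTop m] with n hn
        rw [show ηc * (∑ i ∈ range n, (1:ℝ)/(i+1)) - ηc * (∑ i ∈ range m, (1:ℝ)/(i+1))
            = ηc * ((∑ i ∈ range n, (1:ℝ)/(i+1)) - ∑ i ∈ range m, (1:ℝ)/(i+1)) by ring,
          ← Finset.sum_Ico_eq_sub _ hn, Finset.mul_sum]
        refine Finset.sum_le_sum fun l _ => ?_
        rw [hη l, mul_one_div]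
        apply div_le_div_of_nonneg_left hηc.le (hsqpos l)
        calc Real.sqrt ((l:ℝ) + 1) ≤ Real.sqrt (((l:ℝ) + 1) ^ 2) := by
              apply Real.sqrt_le_sqrt
              have := Nat.cast_nonneg (α := ℝ) l
              nlinarith
          _ = (l:ℝ) + 1 := Real.sqrt_sq (by positivity)
    have hexp : Tendsto (fun n => Real.exp (-(μ * ∑ l ∈ Finset.Ico m n, η l))) atTop (nhds 0) :=
      Real.tendsto_exp_atBot.comp (tendsto_neg_atTop_atBot.comp (hdiv.const_mul_atTop hμ))
    apply squeeze_zero (fun n => Finset.prod_nonneg fun l _ => hC0 l) _ hexp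
    intro n
    calc ∏ l ∈ Finset.Ico m n, C l
        ≤ ∏ l ∈ Finset.Ico m n, Real.exp (-(η l * μ)) := by
          refine Finset.prod_le_prod (fun l _ => hC0 l) fun l _ => ?_
          rw [hC l]
          linarith [Real.add_one_le_exp (-(η l * μ))]
      _ = Real.exp (∑ l ∈ Finset.Ico m n, -(η l * μ)) := (Real.exp_sum _ _).symm
      _ = Real.exp (-(μ * ∑ l ∈ Finset.Ico m n, η l)) := by
          congr 1
          rw [Finset.mul_sum, ← Finset.sum_neg_distrib]
          exact Finset.sum_congr rfl fun l _ => by ring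
  -- telescoping
  have tele : ∀ (f : ℕ → ℝ) (m n : ℕ), m ≤ n →
      ∑ t ∈ Finset.Ico m n, (f (t+1) - f t) = f n - f m := by
    intro f m n hmn
    induction n, hmn using Nat.le_induction with
    | base => simp
    | succ n hmn ih => rw [Finset.sum_Ico_succ_top hmn, ih]; ring
  have hsumtel : ∀ m n : ℕ, m ≤ n →
      ∑ t ∈ Finset.Ico m n, η t * ∏ l ∈ Finset.Ico (t+1) (n+1), C l ≤ 1 / μ := by
    intro m n hmn
    rw [le_div_iff₀ hμ]
    have key : (∑ t ∈ Finset.Ico m n, η t * ∏ l ∈ Finset.Ico (t+1) (n+1), C l) * μ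
        = (∏ l ∈ Finset.Ico n (n+1), C l) - ∏ l ∈ Finset.Ico m (n+1), C l := by
      rw [Finset.sum_mul, ← tele (fun t => ∏ l ∈ Finset.Ico t (n+1), C l) m n hmn]
      refine Finset.sum_congr rfl fun t ht => ?_
      have ht' : t ≤ n := le_of_lt (Finset.mem_Ico.1 ht).2
      have hp : ∏ l ∈ Finset.Ico t (n+1), C l = C t * ∏ l ∈ Finset.Ico (t+1) (n+1), C l :=
        Finset.prod_eq_prod_Ico_succ_bot (Nat.lt_succ_of_le ht') C
      show η t * (∏ l ∈ Finset.Ico (t+1) (n+1), C l) * μ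
        = (∏ l ∈ Finset.Ico (t+1) (n+1), C l) - ∏ l ∈ Finset.Ico t (n+1), C l
      rw [hp, hC t]; ring
    rw [key]
    have h1 : ∏ l ∈ Finset.Ico n (n+1), C l ≤ 1 :=
      Finset.prod_le_one (fun l _ => hC0 l) fun l _ => hC1 l
    have h2 : 0 ≤ ∏ l ∈ Finset.Ico m (n+1), C l := Finset.prod_nonneg fun l _ => hC0 l
    linarith
  set T : ℕ → ℝ := fun n =>
    (∑ t ∈ range n, (∏ l ∈ Finset.Ico (t+1) (n+1), C l) * η t ^ 2) + η n ^ 2 with hTdef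
  have hTnn : ∀ n, 0 ≤ T n := fun n =>
    add_nonneg (Finset.sum_nonneg fun t _ =>
      mul_nonneg (Finset.prod_nonneg fun l _ => hC0 l) (sq_nonneg _)) (sq_nonneg _)
  have hbound : ∀ m n : ℕ, m ≤ n →
      T n ≤ (∑ t ∈ range m, η t ^ 2) * (∏ l ∈ Finset.Ico m (n+1), C l) + η m / μ + η n ^ 2 := by
    intro m n hmn
    have hsplit : (∑ t ∈ range n, (∏ l ∈ Finset.Ico (t+1) (n+1), C l) * η t ^ 2)
        = (∑ t ∈ Finset.Ico 0 m, (∏ l ∈ Finset.Ico (t+1) (n+1), C l) * η t ^ 2)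
          + ∑ t ∈ Finset.Ico m n, (∏ l ∈ Finset.Ico (t+1) (n+1), C l) * η t ^ 2 := by
      rw [Finset.range_eq_Ico, ← Finset.sum_Ico_consecutive _ (Nat.zero_le m) hmn]
    have hhead : (∑ t ∈ Finset.Ico 0 m, (∏ l ∈ Finset.Ico (t+1) (n+1), C l) * η t ^ 2)
        ≤ (∑ t ∈ range m, η t ^ 2) * ∏ l ∈ Finset.Ico m (n+1), C l := by
      rw [Finset.range_eq_Ico, Finset.sum_mul]
      refine Finset.sum_le_sum fun t ht => ?_
      have ht' : t + 1 ≤ m := (Finset.mem_Ico.1 ht).2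
      rw [← Finset.prod_Ico_consecutive C ht' (show m ≤ n + 1 by omega)]
      have h1 : ∏ l ∈ Finset.Ico (t+1) m, C l ≤ 1 :=
        Finset.prod_le_one (fun l _ => hC0 l) fun l _ => hC1 l
      have h2 : 0 ≤ ∏ l ∈ Finset.Ico m (n+1), C l := Finset.prod_nonneg fun l _ => hC0 l
      have h3 : 0 ≤ η t ^ 2 := sq_nonneg _
      have h4 : 0 ≤ ∏ l ∈ Finset.Ico (t+1) m, C l := Finset.prod_nonneg fun l _ => hC0 l
      nlinarith [mul_nonneg h2 h3, mul_le_mul_of_nonneg_right h1 (mul_nonneg h2 h3)]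
    have htail : (∑ t ∈ Finset.Ico m n, (∏ l ∈ Finset.Ico (t+1) (n+1), C l) * η t ^ 2)
        ≤ η m / μ := by
      have step1 : (∑ t ∈ Finset.Ico m n, (∏ l ∈ Finset.Ico (t+1) (n+1), C l) * η t ^ 2)
          ≤ η m * ∑ t ∈ Finset.Ico m n, η t * ∏ l ∈ Finset.Ico (t+1) (n+1), C l := by
        rw [Finset.mul_sum]
        refine Finset.sum_le_sum fun t ht => ?_
        have h5 : η t ≤ η m := hηanti m t (Finset.mem_Ico.1 ht).1
        have h2 : 0 ≤ ∏ l ∈ Finset.Ico (t+1) (n+1), C l := Finset.prod_nonneg fun l _ => hC0 l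
        have h6 : 0 < η t := hηpos t
        have h7 := mul_le_mul_of_nonneg_right h5 (mul_nonneg h6.le h2)
        nlinarith [h7]
      calc (∑ t ∈ Finset.Ico m n, (∏ l ∈ Finset.Ico (t+1) (n+1), C l) * η t ^ 2)
          ≤ η m * ∑ t ∈ Finset.Ico m n, η t * ∏ l ∈ Finset.Ico (t+1) (n+1), C l := step1
        _ ≤ η m * (1 / μ) := mul_le_mul_of_nonneg_left (hsumtel m n hmn) (hηpos m).le
        _ = η m / μ := by ring
    have : T n = (∑ t ∈ range n, (∏ l ∈ Finset.Ico (t+1) (n+1), C l) * η t ^ 2) + η n ^ 2 := rfl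
    rw [this, hsplit]
    linarith
  have hT0 : Tendsto T atTop (nhds 0) := by
    rw [Metric.tendsto_atTop]
    intro ε hε
    obtain ⟨m, hm⟩ :=
      (hηtends.eventually_lt_const (show (0:ℝ) < μ * (ε/2) by positivity)).exists
    have hmε : η m / μ < ε / 2 := by rw [div_lt_iff₀ hμ]; nlinarith
    have hrest : Tendsto
        (fun n => (∑ t ∈ range m, η t ^ 2) * (∏ l ∈ Finset.Ico m (n+1), C l) + η n ^ 2)
        atTop (nhds 0) := by
      have h1 : Tendsto (fun n : ℕ => ∏ l ∈ Finset.Ico m (n+1), C l) atTop (nhds 0) :=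
        (hprod0 m).comp (tendsto_add_atTop_nat 1)
      have h2 := h1.const_mul (∑ t ∈ range m, η t ^ 2)
      have h3 : Tendsto (fun n => η n ^ 2) atTop (nhds 0) := by
        have := hηtends.pow 2
        simpa using this
      simpa using h2.add h3
    obtain ⟨N, hN⟩ := eventually_atTop.1 (hrest.eventually_lt_const (half_pos hε))
    refine ⟨max N m, fun n hn => ?_⟩
    have hnN := le_trans (le_max_left N m) hn
    have hnm := le_trans (le_max_right N m) hn
    have hb := hbound m n hnm
    have hr := hN n hnN
    rw [Real.dist_eq, sub_zero, abs_of_nonneg (hTnn n)]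
    calc T n ≤ (∑ t ∈ range m, η t ^ 2) * (∏ l ∈ Finset.Ico m (n+1), C l) + η m / μ + η n ^ 2 := hb
      _ = ((∑ t ∈ range m, η t ^ 2) * (∏ l ∈ Finset.Ico m (n+1), C l) + η n ^ 2) + η m / μ := by
          ring
      _ < ε / 2 + ε / 2 := add_lt_add hr hmε
      _ = ε := by ring
  have hST : ∀ᶠ k in atTop, S k = T (k - 1) := by
    filter_upwards [eventually_ge_atTop 2] with k hk
    rw [hS k hk]
    have h1 : k - 1 + 1 = k := by omega
    simp only [hTdef]
    rw [h1]
    refine congrArg (· + η (k - 1) ^ 2) ?_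
    refine Finset.sum_congr rfl fun t ht => ?_
    have h2 : Finset.Icc (t + 1) (k - 1) = Finset.Ico (t + 1) k := by
      ext x; simp only [Finset.mem_Icc, Finset.mem_Ico]; omega
    rw [h2]
  have hcomp : Tendsto (fun k => T (k - 1)) atTop (nhds 0) :=
    hT0.comp (tendsto_sub_atTop_nat 1)
  have hST' : S =ᶠ[atTop] fun k => T (k - 1) := hST
  exact Filter.Tendsto.congr' hST'.symm hcomp
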